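/- Fix integers 0 ≤ m < M < k, and let S ⊆ T(n,k) be the set of strings whose span (maximum symbol minus minimum symbol) lies between m and M inclusive. Then every β ∈ S is increasable in S to some rotation of α = (k−m)k^{n−1}. -/

import Mathlib

namespace UCG

abbrev Str (n k : ℕ) := Fin n → Fin k

def OneUp {n k : ℕ} (β γ : Str n k) : Prop :=
  ∃ i : Fin n, β i < γ i ∧ ∀ j : Fin n, j ≠ i → β j = γ j

def IncrTo {n k : ℕ} (S : Set (Str n k)) (β α : Str n k) : Prop :=
  β ∈ S ∧ Relation.ReflTransGen (fun x y => OneUp x y ∧ y ∈ S) β α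

def IsRotation {n k : ℕ} (β γ : Str n k) : Prop :=
  ∃ j : ℕ, ∀ i : Fin n, γ i = β ⟨(i.val + j) % n, Nat.mod_lt _ i.pos⟩

def ClosedUnderRot {n k : ℕ} (S : Set (Str n k)) : Prop :=
  ∀ β ∈ S, ∀ γ, IsRotation β γ → γ ∈ S

def shift {n k : ℕ} (c : Fin k) (β : Str n k) : Str n k :=
  fun i => if i.val = 0 then c else β ⟨i.val - 1, lt_of_le_of_lt (Nat.sub_le _ _) i.isLt⟩

def lastSym {n k : ℕ} (hn : 0 < n) (β : Str n k) : Fin k :=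
  β ⟨n - 1, Nat.sub_lt hn one_pos⟩

/-- `WinIn hn S tgt β m`: in the Warden's Game with legal positions `S`, starting
from position `β`, the prisoner can force the position `tgt` to be reached within
at most `m` moves, whatever the warden does.  A move from `β = γb` is either a
warden move to `cγ ∈ S` with `c < b`, or (if the warden passes) a prisoner move
to `cγ ∈ S` with `c ≥ b`. -/
inductive WinIn {n k : ℕ} (hn : 0 < n) (S : Set (Str n k)) (tgt : Str n k) :
    Str n k → ℕ → Prop
  | passWin (β : Str n k) (m : ℕ) (c : Fin k)
      (hc : lastSym hn β ≤ c) (hcS : shift c β ∈ S) (heq : shift c β = tgt)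
      (hW : ∀ c' : Fin k, c' < lastSym hn β → shift c' β ∈ S → shift c' β ≠ tgt →
        WinIn hn S tgt (shift c' β) m) :
      WinIn hn S tgt β (m + 1)
  | passStep (β : Str n k) (m : ℕ) (c : Fin k)
      (hc : lastSym hn β ≤ c) (hcS : shift c β ∈ S)
      (hwin : WinIn hn S tgt (shift c β) m)
      (hW : ∀ c' : Fin k, c' < lastSym hn β → shift c' β ∈ S → shift c' β ≠ tgt →
        WinIn hn S tgt (shift c' β) m) :
      WinIn hn S tgt β (m + 1)

noncomputable def remoteness {n k : ℕ} (hn : 0 < n) (S : Set (Str n k))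
    (tgt β : Str n k) : ℕ∞ :=
  sInf {e : ℕ∞ | ∃ t : ℕ, e = t ∧ WinIn hn S tgt β t}

def fshift {n k : ℕ} (b : Fin k) (β : Str n k) : Str n k :=
  fun i => if h : i.val = n - 1 then b else β ⟨i.val + 1, by have := i.isLt; omega⟩

def GreedyOk {n k : ℕ} (S : Set (Str n k)) (B : ℕ → Option (Str n k)) (m : ℕ)
    (β : Str n k) (b : Fin k) : Prop :=
  fshift b β ∈ S ∧ ∀ i : ℕ, 1 ≤ i → i ≤ m → B i ≠ some (fshift b β)

def IsGreedy {n k : ℕ} (S : Set (Str n k)) (α : Str n k)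
    (B : ℕ → Option (Str n k)) : Prop :=
  B 0 = some α ∧
  (∀ m : ℕ, B m = none → B (m + 1) = none) ∧
  ∀ m : ℕ, ∀ β : Str n k, B m = some β →
    ((1 ≤ m ∧ β = α) → B (m + 1) = none) ∧
    ((m = 0 ∨ β ≠ α) →
      ((¬ ∃ b : Fin k, GreedyOk S B m β b) → B (m + 1) = none) ∧
      (∀ b : Fin k, GreedyOk S B m β b → (∀ b' : Fin k, b' < b → ¬ GreedyOk S B m β b') →
        B (m + 1) = some (fshift b β)))

def CycSubstr {m n k : ℕ} (hn : 0 < n) (γ : Str m k) (β : Str n k) : Prop :=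
  ∃ j : ℕ, ∀ i : Fin m, β ⟨(j + i.val) % n, Nat.mod_lt _ hn⟩ = γ i

/-- The span of a string: greatest symbol minus least symbol. -/
def spanOf {n k : ℕ} (hn : 0 < n) (β : Str n k) : ℕ :=
  (Finset.univ.sup' (Finset.univ_nonempty_iff.mpr ⟨⟨0, hn⟩⟩) fun i => (β i : ℕ)) -
  (Finset.univ.inf' (Finset.univ_nonempty_iff.mpr ⟨⟨0, hn⟩⟩) fun i => (β i : ℕ))

lemma oneUp_update {n k : ℕ} (β : Str n k) (i : Fin n) (v : Fin k) (h : β i < v) :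
    OneUp β (Function.update β i v) :=
  ⟨i, by rw [Function.update_self]; exact h,
    fun j hj => (Function.update_of_ne hj _ _).symm⟩

lemma raise_on {n k : ℕ} {S : Set (Str n k)} {β₀ f : Str n k}
    (hS : ∀ γ : Str n k, (∀ i, β₀ i ≤ γ i ∧ γ i ≤ f i) → γ ∈ S) :
    ∀ (l : List (Fin n)) (β : Str n k), (∀ i, β₀ i ≤ β i) → (∀ i, β i ≤ f i) →
      (∀ i, i ∉ l → β i = f i) →
      Relation.ReflTransGen (fun x y => OneUp x y ∧ y ∈ S) β f := by
  intro l
  induction l with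
  | nil =>
    intro β h0 hf hout
    have hbf : β = f := funext fun i => hout i List.not_mem_nil
    exact hbf ▸ Relation.ReflTransGen.refl
  | cons i l ih =>
    intro β h0 hf hout
    by_cases hie : β i = f i
    · refine ih β h0 hf fun j hj => ?_
      by_cases hji : j = i
      · exact hji ▸ hie
      · exact hout j (by simp [hji, hj])
    · set β' := Function.update β i (f i) with hβ'
      have hb0' : ∀ j, β₀ j ≤ β' j := by
        intro j; by_cases hji : j = i
        · subst hji; rw [hβ', Function.update_self]; exact le_trans (h0 j) (hf j)
        · rw [hβ', Function.update_of_ne hji]; exact h0 j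
      have hbf' : ∀ j, β' j ≤ f j := by
        intro j; by_cases hji : j = i
        · subst hji; rw [hβ', Function.update_self]
        · rw [hβ', Function.update_of_ne hji]; exact hf j
      have hstep : OneUp β β' := oneUp_update β i (f i) (lt_of_le_of_ne (hf i) hie)
      refine Relation.ReflTransGen.head ⟨hstep, hS β' fun j => ⟨hb0' j, hbf' j⟩⟩ ?_
      refine ih β' hb0' hbf' fun j hj => ?_
      by_cases hji : j = i
      · subst hji; rw [hβ', Function.update_self]
      · rw [hβ', Function.update_of_ne hji]; exact hout j (by simp [hji, hj])

lemma raise_all {n k : ℕ} {S : Set (Str n k)} (β f : Str n k)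
    (hle : ∀ i, β i ≤ f i)
    (hS : ∀ γ : Str n k, (∀ i, β i ≤ γ i ∧ γ i ≤ f i) → γ ∈ S) :
    Relation.ReflTransGen (fun x y => OneUp x y ∧ y ∈ S) β f :=
  raise_on hS (List.finRange n) β (fun _ => le_refl _) hle
    (fun i hi => absurd (List.mem_finRange i) hi)

lemma mem_span {n k m M : ℕ} (hn : 0 < n) (β : Str n k)
    (hlo : ∃ i j : Fin n, (β j : ℕ) + m ≤ (β i : ℕ))
    (hhi : ∀ i j : Fin n, (β i : ℕ) ≤ (β j : ℕ) + M) :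
    m ≤ spanOf hn β ∧ spanOf hn β ≤ M := by
  classical
  have hne : (Finset.univ : Finset (Fin n)).Nonempty := Finset.univ_nonempty_iff.mpr ⟨⟨0, hn⟩⟩
  obtain ⟨i1, -, h1⟩ := Finset.exists_mem_eq_sup' hne (fun i => (β i : ℕ))
  obtain ⟨i2, -, h2⟩ := Finset.exists_mem_eq_inf' hne (fun i => (β i : ℕ))
  have e : spanOf hn β =
      (Finset.univ.sup' hne fun i => (β i : ℕ)) - (Finset.univ.inf' hne fun i => (β i : ℕ)) := rfl
  rw [h1, h2] at e
  obtain ⟨i, j, hij⟩ := hlo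
  have hs1 : (β i : ℕ) ≤ (β i1 : ℕ) := h1 ▸ Finset.le_sup' (fun i => ((β i : ℕ))) (Finset.mem_univ i)
  have hs2 : (β i2 : ℕ) ≤ (β j : ℕ) := h2 ▸ Finset.inf'_le (fun i => ((β i : ℕ))) (Finset.mem_univ j)
  have hh := hhi i1 i2
  have hs3 : (β i2 : ℕ) ≤ (β i1 : ℕ) := h2 ▸ Finset.inf'_le (fun i => ((β i : ℕ))) (Finset.mem_univ i1)
  omega

lemma exists_lo {n k m : ℕ} (i0 : Fin n) (hm2 : m = 0 ∨ 2 ≤ n) (γ : Str n k)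
    (h : ∀ j, j ≠ i0 → (γ i0 : ℕ) + m ≤ (γ j : ℕ)) :
    ∃ i j : Fin n, (γ j : ℕ) + m ≤ (γ i : ℕ) := by
  rcases hm2 with h0 | h2
  · exact ⟨i0, i0, by omega⟩
  · have : Nontrivial (Fin n) := Fin.nontrivial_iff_two_le.mpr h2
    obtain ⟨j, hj⟩ := exists_ne i0
    exact ⟨j, i0, h j hj⟩

lemma climb {n k m M : ℕ} (hn : 0 < n) (hm : m < M) (hM : M < k) (i0 : Fin n)
    (hm2 : m = 0 ∨ 2 ≤ n) :
    ∀ (N x t : ℕ) (hx : x < k) (ht : t < k),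
      x + m ≤ t → t ≤ x + M → t ≤ k - 1 → x ≤ k - 1 - m → k - 1 - x ≤ N →
      Relation.ReflTransGen
        (fun a b => OneUp a b ∧ b ∈ {β : Str n k | m ≤ spanOf hn β ∧ spanOf hn β ≤ M})
        (fun i => if i = i0 then ⟨x, hx⟩ else ⟨t, ht⟩)
        (fun i => if i = i0 then ⟨k - m - 1, by omega⟩ else ⟨k - 1, by omega⟩) := by
  intro N
  induction N with
  | zero =>
    intro x t hx ht h1 h2 h3 h4 h5
    have hgoal : (fun i => if i = i0 then (⟨x, hx⟩ : Fin k) else ⟨t, ht⟩) =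
        (fun i => if i = i0 then (⟨k - m - 1, by omega⟩ : Fin k) else ⟨k - 1, by omega⟩) := by
      funext i
      by_cases hi : i = i0 <;> simp only [hi, if_true, if_false] <;> exact Fin.ext (by simp; omega)
    rw [hgoal]
  | succ N ih =>
    intro x t hx ht h1 h2 h3 h4 h5
    set t' := min (x + M) (k - 1) with ht'def
    have ht'k : t' < k := by omega
    have hxt' : x + m ≤ t' := by omega
    -- step A : raise the non-i0 coordinates from t to t'
    have stepA : Relation.ReflTransGen
        (fun a b => OneUp a b ∧ b ∈ {β : Str n k | m ≤ spanOf hn β ∧ spanOf hn β ≤ M})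
        (fun i => if i = i0 then ⟨x, hx⟩ else ⟨t, ht⟩)
        (fun i => if i = i0 then ⟨x, hx⟩ else ⟨t', ht'k⟩) := by
      apply raise_all
      · intro i
        by_cases hi : i = i0 <;> simp only [hi, if_true, if_false] <;> rw [Fin.le_def] <;> simp <;> omega
      · intro γ hγ
        have hγ0 : (γ i0 : ℕ) = x := by
          have h1' := (hγ i0).1; have h2' := (hγ i0).2
          simp [Fin.le_def] at h1' h2'
          omega
        have hγj : ∀ j, j ≠ i0 → t ≤ (γ j : ℕ) ∧ (γ j : ℕ) ≤ t' := by
          intro j hj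
          have h1' := (hγ j).1; have h2' := (hγ j).2
          simp [hj, Fin.le_def] at h1' h2'
          exact ⟨h1', h2'⟩
        apply mem_span
        · apply exists_lo i0 hm2
          intro j hj
          have := hγj j hj
          omega
        · intro i j
          have hub : (γ i : ℕ) ≤ x + M := by
            by_cases hi : i = i0
            · rw [hi, hγ0]; omega
            · have := hγj i hi; omega
          have hlb : x ≤ (γ j : ℕ) := by
            by_cases hj : j = i0
            · rw [hj, hγ0]
            · have := hγj j hj; omega
          omega
    set x' := t' - m with hx'def
    have hx'k : x' < k := by omega
    -- step B : raise the i0 coordinate from x to x'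
    have stepB : Relation.ReflTransGen
        (fun a b => OneUp a b ∧ b ∈ {β : Str n k | m ≤ spanOf hn β ∧ spanOf hn β ≤ M})
        (fun i => if i = i0 then ⟨x, hx⟩ else ⟨t', ht'k⟩)
        (fun i => if i = i0 then ⟨x', hx'k⟩ else ⟨t', ht'k⟩) := by
      apply raise_all
      · intro i
        by_cases hi : i = i0 <;> simp only [hi, if_true, if_false] <;> rw [Fin.le_def] <;> simp <;> omega
      · intro γ hγ
        have hγ0 : x ≤ (γ i0 : ℕ) ∧ (γ i0 : ℕ) ≤ x' := by
          have h1' := (hγ i0).1; have h2' := (hγ i0).2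
          simp [Fin.le_def] at h1' h2'
          exact ⟨h1', h2'⟩
        have hγj : ∀ j, j ≠ i0 → (γ j : ℕ) = t' := by
          intro j hj
          have h1' := (hγ j).1; have h2' := (hγ j).2
          simp [hj, Fin.le_def] at h1' h2'
          omega
        apply mem_span
        · apply exists_lo i0 hm2
          intro j hj
          have := hγj j hj
          omega
        · intro i j
          have hub : (γ i : ℕ) ≤ x + M := by
            by_cases hi : i = i0
            · rw [hi]; omega
            · rw [hγj i hi]; omega
          have hlb : x ≤ (γ j : ℕ) := by
            by_cases hj : j = i0
            · rw [hj]; exact hγ0.1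
            · rw [hγj j hj]; omega
          omega
    by_cases hcase : t' = k - 1
    · have hfin : (fun i => if i = i0 then (⟨x', hx'k⟩ : Fin k) else ⟨t', ht'k⟩) =
          (fun i => if i = i0 then (⟨k - m - 1, by omega⟩ : Fin k) else ⟨k - 1, by omega⟩) := by
        funext i
        by_cases hi : i = i0 <;> simp only [hi, if_true, if_false] <;> exact Fin.ext (by simp; omega)
      exact hfin ▸ stepA.trans stepB
    · have ht'eq : t' = x + M := by omega
      refine (stepA.trans stepB).trans (ih x' t' hx'k ht'k (by omega) (by omega) (by omega)
        (by omega) (by omega))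

/-- with `0 ≤ m < M < k`, every string of span between `m` and `M` is
increasable in that set to a rotation of `α = (k-m)k^(n-1)`. -/
theorem span_incr {n k m M : ℕ} (hn : 0 < n) (hm : m < M) (hM : M < k) :
    ∀ β ∈ {β : Str n k | m ≤ spanOf hn β ∧ spanOf hn β ≤ M},
      ∃ γ, IsRotation
          (fun i : Fin n =>
            if i.val = 0 then (⟨k - m - 1, by omega⟩ : Fin k) else (⟨k - 1, by omega⟩ : Fin k)) γ ∧
        IncrTo {β : Str n k | m ≤ spanOf hn β ∧ spanOf hn β ≤ M} β γ := by
  classical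
  intro β hβ
  obtain ⟨hsm, hsM⟩ := hβ
  have hne : (Finset.univ : Finset (Fin n)).Nonempty := Finset.univ_nonempty_iff.mpr ⟨⟨0, hn⟩⟩
  obtain ⟨i1, -, h1⟩ := Finset.exists_mem_eq_sup' hne (fun i => (β i : ℕ))
  obtain ⟨i2, -, h2⟩ := Finset.exists_mem_eq_inf' hne (fun i => (β i : ℕ))
  set a := (β i2 : ℕ) with hadef
  set b := (β i1 : ℕ) with hbdef
  have e : spanOf hn β =
      (Finset.univ.sup' hne fun i => (β i : ℕ)) - (Finset.univ.inf' hne fun i => (β i : ℕ)) := rfl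
  rw [h1, h2] at e
  have hs : ∀ i, (β i : ℕ) ≤ b := fun i => h1 ▸ Finset.le_sup' (fun i => ((β i : ℕ))) (Finset.mem_univ i)
  have hi : ∀ i, a ≤ (β i : ℕ) := fun i => h2 ▸ Finset.inf'_le (fun i => ((β i : ℕ))) (Finset.mem_univ i)
  have hab : a ≤ b := hi i1
  have hab1 : a + m ≤ b := by omega
  have hab2 : b ≤ a + M := by omega
  have hak : a < k := (β i2).isLt
  have hbk : b < k := (β i1).isLt
  have hm2 : m = 0 ∨ 2 ≤ n := by
    rcases le_or_gt 2 n with h | h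
    · exact Or.inr h
    · left
      have h12 : i1 = i2 := Fin.ext (by have := i1.isLt; have := i2.isLt; omega)
      have : b = a := by rw [hbdef, h12]
      omega
  set top1 := min (a + M) (k - 1) with htop1def
  have htop1k : top1 < k := by omega
  have hbtop1 : b ≤ top1 := by omega
  -- phase 1 : raise all non-i2 coordinates up to top1
  have phase1 : Relation.ReflTransGen
      (fun x y => OneUp x y ∧ y ∈ {β : Str n k | m ≤ spanOf hn β ∧ spanOf hn β ≤ M})
      β (fun i => if i = i2 then ⟨a, hak⟩ else ⟨top1, htop1k⟩) := by
    apply raise_all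
    · intro i
      by_cases hii : i = i2
      · rw [hii, if_pos rfl]
      · simp only [if_neg hii]; rw [Fin.le_def]; simp; exact le_trans (hs i) hbtop1
    · intro γ hγ
      have hγ0 : (γ i2 : ℕ) = a := by
        have h1' := (hγ i2).1; have h2' := (hγ i2).2
        rw [if_pos rfl] at h2'
        rw [Fin.le_def] at h1' h2'
        simp only [Fin.val_mk] at h2'
        omega
      have hγlb : ∀ j, (β j : ℕ) ≤ (γ j : ℕ) := by
        intro j; have := (hγ j).1; rwa [Fin.le_def] at this
      have hγub : ∀ j, (γ j : ℕ) ≤ top1 := by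
        intro j
        have h2' := (hγ j).2
        by_cases hj : j = i2
        · rw [hj, hγ0]; omega
        · simp only [if_neg hj, Fin.le_def] at h2'; exact h2'
      apply mem_span
      · refine ⟨i1, i2, ?_⟩
        have := hγlb i1
        omega
      · intro i j
        have h1' := hγub i
        have h2' : a ≤ (γ j : ℕ) := le_trans (hi j) (hγlb j)
        omega
  have phase2 := climb hn hm hM i2 hm2 k a top1 hak htop1k (by omega) (by omega) (by omega)
    (by omega) (by omega)
  refine ⟨_, ?_, ⟨⟨hsm, hsM⟩, phase1.trans phase2⟩⟩
  -- the endpoint is a rotation of α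
  refine ⟨n - i2.val, ?_⟩
  intro i
  have hkey : ((i.val + (n - i2.val)) % n = 0) ↔ i = i2 := by
    have hi1 := i.isLt
    have hi2 := i2.isLt
    constructor
    · intro h
      rcases Nat.lt_or_ge (i.val + (n - i2.val)) n with hlt | hge
      · rw [Nat.mod_eq_of_lt hlt] at h
        exact Fin.ext (by omega)
      · rw [Nat.mod_eq_sub_mod hge, Nat.mod_eq_of_lt (by omega)] at h
        exact Fin.ext (by omega)
    · rintro rfl
      have hsum : i.val + (n - i.val) = n := by omega
      rw [hsum, Nat.mod_self]
  by_cases hii : i = i2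
  · simp only [if_pos hii, Fin.val_mk, if_pos (hkey.mpr hii)]
  · simp only [if_neg hii, Fin.val_mk]
    rw [if_neg (fun hc => hii (hkey.mp hc))]

end UCG
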